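/- Define F₂(z) = √π · Σ_{n=2}^∞ zⁿ/(n(n-1)·Γ(n + 1/2)) for z > 0. Then F₂(z)/(z^{-3/2}·e^{z}) → √π as z → ∞. -/

import Mathlib

open Real Filter MeasureTheory Set intervalIntegral

lemma exp_summable (x : ℝ) : Summable (fun n : ℕ => x ^ (n+2) / (n+2).factorial) :=
  ((Real.summable_pow_div_factorial x).comp_injective (add_left_injective 2) : _)

lemma exp_tail (x : ℝ) : ∑' n : ℕ, x ^ (n+2) / (n+2).factorial = Real.exp x - 1 - x := by
  have h := Summable.sum_add_tsum_nat_add' (f := fun n : ℕ => x ^ n / n.factorial) (k := 2)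
    (exp_summable x)
  have hexp : Real.exp x = ∑' n : ℕ, x ^ n / n.factorial := by
    rw [Real.exp_eq_exp_ℝ, NormedSpace.exp_eq_tsum_div]
  rw [hexp, ← h]
  simp [Finset.sum_range_succ, Nat.factorial]
  ring

lemma beta_real (n : ℕ) :
    ∫ u in (0:ℝ)..1, u ^ n * Real.sqrt (1 - u)
      = (n.factorial : ℝ) * Real.Gamma (3/2) / Real.Gamma ((n:ℝ) + 5/2) := by
  have h := Complex.Gamma_mul_Gamma_eq_betaIntegral
    (s := (n:ℂ) + 1) (t := 3/2) (by simp [Complex.add_re]; positivity) (by norm_num)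
  have hb : Complex.betaIntegral ((n:ℂ)+1) (3/2)
      = ((∫ u in (0:ℝ)..1, u ^ n * Real.sqrt (1 - u) : ℝ) : ℂ) := by
    rw [Complex.betaIntegral]
    rw [← intervalIntegral.integral_ofReal]
    refine intervalIntegral.integral_congr fun x hx => ?_
    rw [uIcc_of_le (by norm_num : (0:ℝ) ≤ 1)] at hx
    obtain ⟨hx0, hx1⟩ := hx
    have h1 : ((n:ℂ)+1-1) = (n:ℂ) := by ring
    have h2 : ((3:ℂ)/2 - 1) = ((1/2 : ℝ) : ℂ) := by norm_num
    have h3 : ((1:ℂ) - (x:ℂ)) = ((1 - x : ℝ) : ℂ) := by push_cast; ring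
    rw [h1, h2, h3, Complex.cpow_natCast, ← Complex.ofReal_cpow (by linarith)]
    push_cast
    rw [← Real.sqrt_eq_rpow]
  rw [hb] at h
  have hg1 : Complex.Gamma ((n:ℂ) + 1) = ((n.factorial : ℝ) : ℂ) := by
    have := Complex.Gamma_nat_eq_factorial n
    push_cast at this ⊢; exact this
  have hg2 : Complex.Gamma (3/2) = ((Real.Gamma (3/2) : ℝ) : ℂ) := by
    rw [show (3/2:ℂ) = ((3/2:ℝ):ℂ) by norm_num, Complex.Gamma_ofReal]
  have hg3 : Complex.Gamma ((n:ℂ) + 1 + 3/2) = ((Real.Gamma ((n:ℝ) + 5/2) : ℝ) : ℂ) := by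
    have := Complex.Gamma_ofReal ((n:ℝ) + 5/2)
    rw [← this]; congr 1; push_cast; ring
  rw [hg1, hg2, hg3, ← Complex.ofReal_mul, ← Complex.ofReal_mul] at h
  have h' := Complex.ofReal_injective h
  have hΓpos : 0 < Real.Gamma ((n:ℝ) + 5/2) := Real.Gamma_pos_of_pos (by positivity)
  rw [eq_div_iff hΓpos.ne']
  linarith [h']

noncomputable def Tint (z : ℝ) : ℝ :=
  ∫ u in Ioo (0:ℝ) 1, Real.sqrt (1-u) * (Real.exp (z*u) - 1 - z*u) / u^2

lemma closed_form {z : ℝ} (hz : 0 < z) :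
    (∑' n : ℕ, z ^ (n + 2) /
      (((n : ℝ) + 2) * ((n : ℝ) + 1) * Real.Gamma (1 / 2 + ((n : ℝ) + 2))))
      = Tint z / Real.Gamma (3/2) := by
  set f : ℕ → ℝ → ℝ := fun n u => z ^ (n+2) * (u ^ n * Real.sqrt (1-u)) / (n+2).factorial
    with hf
  have hΓ32 : (0:ℝ) < Real.Gamma (3/2) := Real.Gamma_pos_of_pos (by norm_num)
  -- each term equals integral
  have hterm : ∀ n : ℕ, z ^ (n + 2) /
      (((n : ℝ) + 2) * ((n : ℝ) + 1) * Real.Gamma (1 / 2 + ((n : ℝ) + 2)))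
      = (∫ u in Ioo (0:ℝ) 1, f n u) / Real.Gamma (3/2) := by
    intro n
    have hint : ∫ u in Ioo (0:ℝ) 1, f n u
        = z ^ (n+2) / (n+2).factorial *
          ((n.factorial : ℝ) * Real.Gamma (3/2) / Real.Gamma ((n:ℝ) + 5/2)) := by
      rw [← beta_real n, ← MeasureTheory.integral_Ioc_eq_integral_Ioo,
        ← intervalIntegral.integral_of_le (by norm_num : (0:ℝ) ≤ 1),
        ← intervalIntegral.integral_const_mul]
      refine intervalIntegral.integral_congr fun x hx => ?_
      simp only [hf]
      ring
    rw [hint]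
    have hΓn : (0:ℝ) < Real.Gamma ((n:ℝ) + 5/2) := Real.Gamma_pos_of_pos (by positivity)
    have h5 : (1:ℝ)/2 + ((n:ℝ) + 2) = (n:ℝ) + 5/2 := by ring
    rw [h5]
    have hfac : ((n+2).factorial : ℝ) = ((n:ℝ)+2) * ((n:ℝ)+1) * n.factorial := by
      rw [Nat.factorial_succ, Nat.factorial_succ]
      push_cast; ring
    rw [hfac]
    have : (0:ℝ) < (n.factorial : ℝ) := by positivity
    field_simp
  rw [tsum_congr hterm, tsum_div_const]
  congr 1
  -- now swap
  have hmeas : ∀ n : ℕ, AEStronglyMeasurable (f n) (volume.restrict (Ioo (0:ℝ) 1)) := by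
    intro n
    apply Continuous.aestronglyMeasurable
    continuity
  have hbound : ∀ n : ℕ, ∫⁻ u in Ioo (0:ℝ) 1, ‖f n u‖₊ ∂volume
      ≤ ENNReal.ofReal (z ^ (n+2) / (n+2).factorial) := by
    intro n
    have : ∫⁻ u in Ioo (0:ℝ) 1, ‖f n u‖₊ ∂volume
        ≤ ∫⁻ _ in Ioo (0:ℝ) 1, ENNReal.ofReal (z ^ (n+2) / (n+2).factorial) ∂volume := by
      refine MeasureTheory.lintegral_mono_ae ?_
      rw [MeasureTheory.ae_restrict_iff' measurableSet_Ioo]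
      filter_upwards with u hu
      rw [← ENNReal.ofReal_coe_nnreal, coe_nnnorm]
      apply ENNReal.ofReal_le_ofReal
      rw [hf]
      simp only [norm_div, norm_mul, Real.norm_eq_abs]
      rw [abs_of_nonneg (by positivity : (0:ℝ) ≤ z ^ (n+2)),
        abs_of_nonneg (by positivity : (0:ℝ) ≤ ((n+2).factorial : ℝ))]
      have h1 : |u ^ n| ≤ 1 := by
        rw [abs_pow]
        exact pow_le_one₀ (abs_nonneg u) (by rw [abs_of_nonneg hu.1.le]; exact hu.2.le)
      have h2 : |Real.sqrt (1-u)| ≤ 1 := by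
        rw [abs_of_nonneg (Real.sqrt_nonneg _)]
        exact Real.sqrt_le_one.mpr (by linarith [hu.1])
      calc z^(n+2) * (|u^n| * |Real.sqrt (1-u)|) / ((n+2).factorial : ℝ)
          ≤ z^(n+2) * (1*1) / ((n+2).factorial : ℝ) := by
            gcongr
        _ = z^(n+2) / ((n+2).factorial : ℝ) := by ring
    calc ∫⁻ u in Ioo (0:ℝ) 1, ‖f n u‖₊ ∂volume
        ≤ ∫⁻ _ in Ioo (0:ℝ) 1, ENNReal.ofReal (z ^ (n+2) / (n+2).factorial) ∂volume := this
      _ = ENNReal.ofReal (z ^ (n+2) / (n+2).factorial) * volume (Ioo (0:ℝ) 1) := by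
          rw [MeasureTheory.setLIntegral_const]
      _ ≤ ENNReal.ofReal (z ^ (n+2) / (n+2).factorial) := by
          simp [Real.volume_Ioo]
  have hfin : (∑' n : ℕ, ∫⁻ u in Ioo (0:ℝ) 1, ‖f n u‖₊ ∂volume) ≠ ⊤ := by
    refine ne_top_of_le_ne_top ?_ (ENNReal.tsum_le_tsum hbound)
    rw [← ENNReal.ofReal_tsum_of_nonneg (fun n => by positivity) (exp_summable z)]
    exact ENNReal.ofReal_ne_top
  have hswap := (MeasureTheory.integral_tsum hmeas hfin).symm
  rw [hswap]
  refine MeasureTheory.setIntegral_congr_ae measurableSet_Ioo ?_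
  filter_upwards with u hu
  have hu0 : u ≠ 0 := ne_of_gt hu.1
  have hpt : ∀ n : ℕ, f n u
      = Real.sqrt (1-u) / u^2 * ((z*u) ^ (n+2) / (n+2).factorial) := by
    intro n
    rw [hf]
    have : (z*u)^(n+2) = z^(n+2) * (u^n * u^2) := by
      rw [mul_pow]; ring
    rw [this]
    field_simp
  rw [tsum_congr hpt, tsum_mul_left, exp_tail (z*u)]
  field_simp

lemma Msub {z : ℝ} (hz : 0 < z) :
    ∫ u in (1/2:ℝ)..1, Real.sqrt (1-u) * Real.exp (z*u) / u^2
      = Real.exp z / (z * Real.sqrt z) *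
        ∫ s in (0:ℝ)..(z/2), Real.sqrt s * Real.exp (-s) / (1 - s/z)^2 := by
  set G : ℝ → ℝ := fun t => Real.sqrt t * Real.exp (z*(1-t)) / (1-t)^2 with hG
  set K := ∫ s in (0:ℝ)..(z/2), Real.sqrt s * Real.exp (-s) / (1 - s/z)^2 with hK
  have h1 : (∫ u in (1/2:ℝ)..1, Real.sqrt (1-u) * Real.exp (z*u) / u^2)
      = ∫ t in (0:ℝ)..(1/2), G t := by
    have step : (∫ u in (1/2:ℝ)..1, Real.sqrt (1-u) * Real.exp (z*u) / u^2)
        = ∫ x in (1/2:ℝ)..1, G (1 - x) := by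
      refine intervalIntegral.integral_congr fun x hx => ?_
      simp only [hG, sub_sub_cancel]
    rw [step, intervalIntegral.integral_comp_sub_left G 1]
    norm_num
  have h2 : (∫ s in (0:ℝ)..(z/2), G (s/z)) = z * ∫ t in (0:ℝ)..(1/2), G t := by
    have h := intervalIntegral.integral_comp_div (a := 0) (b := z/2) (f := G) (ne_of_gt hz)
    have e1 : (0:ℝ)/z = 0 := zero_div z
    have e2 : z/2/z = 1/2 := by field_simp
    rw [h, smul_eq_mul, e1, e2]
  have h3 : (∫ s in (0:ℝ)..(z/2), G (s/z)) = Real.exp z / Real.sqrt z * K := by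
    rw [hK, ← intervalIntegral.integral_const_mul]
    refine intervalIntegral.integral_congr fun s hs => ?_
    rw [uIcc_of_le (by positivity : (0:ℝ) ≤ z/2)] at hs
    have hs0 : 0 ≤ s := hs.1
    simp only [hG]
    rw [Real.sqrt_div' s hz.le, show z*(1-s/z) = z - s by field_simp, Real.exp_sub,
      Real.exp_neg]
    ring
  rw [h1]
  calc (∫ t in (0:ℝ)..(1/2), G t) = (1/z) * (z * ∫ t in (0:ℝ)..(1/2), G t) := by
        field_simp
    _ = (1/z) * (Real.exp z / Real.sqrt z * K) := by rw [← h2, h3]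
    _ = Real.exp z / (z * Real.sqrt z) * K := by ring

lemma Ktendsto :
    Tendsto (fun z : ℝ => ∫ s in (0:ℝ)..(z/2), Real.sqrt s * Real.exp (-s) / (1 - s/z)^2)
      atTop (nhds (Real.Gamma (3/2))) := by
  set μ := volume.restrict (Ioi (0:ℝ)) with hμ
  set F : ℝ → ℝ → ℝ := fun z => (Ioc (0:ℝ) (z/2)).indicator
    (fun s => Real.sqrt s * Real.exp (-s) / (1 - s/z)^2) with hF
  have hbase : ∀ z : ℝ, Measurable (fun s => Real.sqrt s * Real.exp (-s) / (1 - s/z)^2) := by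
    intro z
    exact ((Real.continuous_sqrt.measurable.mul
      (Real.continuous_exp.measurable.comp measurable_neg)).div
      (((measurable_const.sub (measurable_id.div_const z)).pow measurable_const)))
  have key : Tendsto (fun z : ℝ => ∫ s, F z s ∂μ) atTop
      (nhds (∫ s, Real.sqrt s * Real.exp (-s) ∂μ)) := by
    apply MeasureTheory.tendsto_integral_filter_of_dominated_convergence
      (bound := fun s => 4 * (Real.sqrt s * Real.exp (-s)))
    · filter_upwards with z
      exact ((hbase z).aestronglyMeasurable).indicator measurableSet_Ioc
    · filter_upwards [eventually_gt_atTop (0:ℝ)] with z hz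
      refine (MeasureTheory.ae_restrict_iff' measurableSet_Ioi).mpr ?_
      filter_upwards with s hs
      by_cases hmem : s ∈ Ioc (0:ℝ) (z/2)
      · rw [hF]; simp only [indicator_of_mem hmem]
        have h1 : s / z ≤ 1/2 := by
          rw [div_le_div_iff₀ hz (by norm_num)]
          linarith [hmem.2]
        have h2 : (1:ℝ)/2 ≤ 1 - s/z := by linarith
        have h3 : (1:ℝ)/4 ≤ (1 - s/z)^2 := by nlinarith
        have h4 : 0 < (1 - s/z)^2 := by nlinarith
        rw [Real.norm_eq_abs, abs_div, abs_of_nonneg (by positivity),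
          abs_of_nonneg h4.le, div_le_iff₀ h4]
        nlinarith [mul_nonneg (Real.sqrt_nonneg s) (Real.exp_pos (-s)).le]
      · rw [hF]
        simp only [indicator_of_notMem hmem, norm_zero]
        positivity
    · have hg := Real.GammaIntegral_convergent (s := 3/2) (by norm_num)
      have : IntegrableOn (fun s : ℝ => Real.sqrt s * Real.exp (-s)) (Ioi 0) := by
        refine hg.congr_fun (fun x hx => ?_) measurableSet_Ioi
        rw [show (3:ℝ)/2 - 1 = 1/2 by norm_num]; beta_reduce; rw [← Real.sqrt_eq_rpow]
        ring
      exact this.const_mul 4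
    · refine (MeasureTheory.ae_restrict_iff' measurableSet_Ioi).mpr ?_
      filter_upwards with s hs
      have hs0 : 0 < s := hs
      have hev : ∀ᶠ z : ℝ in atTop, Real.sqrt s * Real.exp (-s) / (1 - s/z)^2
          = F z s := by
        filter_upwards [eventually_ge_atTop (2*s)] with z hz
        have hmem : s ∈ Ioc (0:ℝ) (z/2) := ⟨hs0, by linarith⟩
        rw [hF]; simp only [indicator_of_mem hmem]
      have hlim : Tendsto (fun z : ℝ => Real.sqrt s * Real.exp (-s) / (1 - s/z)^2)
          atTop (nhds (Real.sqrt s * Real.exp (-s))) := by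
        have h0 : Tendsto (fun z : ℝ => s/z) atTop (nhds 0) :=
          tendsto_const_nhds.div_atTop tendsto_id
        have h1 : Tendsto (fun z : ℝ => (1 - s/z)^2) atTop (nhds 1) := by
          have := ((tendsto_const_nhds (x := (1:ℝ))).sub h0).pow 2
          norm_num at this
          exact this
        have := Tendsto.div (tendsto_const_nhds
          (x := Real.sqrt s * Real.exp (-s))) h1 one_ne_zero
        rw [div_one] at this; exact this
      exact hlim.congr' hev
  have hΓ : (∫ s, Real.sqrt s * Real.exp (-s) ∂μ) = Real.Gamma (3/2) := by
    rw [Real.Gamma_eq_integral (by norm_num : (0:ℝ) < 3/2)]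
    refine setIntegral_congr_fun measurableSet_Ioi fun x hx => ?_
    rw [show (3:ℝ)/2 - 1 = 1/2 by norm_num, ← Real.sqrt_eq_rpow]
    ring
  rw [hΓ] at key
  refine key.congr' ?_
  filter_upwards [eventually_gt_atTop (0:ℝ)] with z hz
  rw [hF, hμ, MeasureTheory.integral_indicator measurableSet_Ioc,
    Measure.restrict_restrict measurableSet_Ioc,
    inter_eq_self_of_subset_left Ioc_subset_Ioi_self,
    intervalIntegral.integral_of_le (by positivity : (0:ℝ) ≤ z/2)]






lemma exp_lb (x : ℝ) : 0 ≤ Real.exp x - 1 - x := by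
  nlinarith [Real.add_one_le_exp x]

lemma exp_ub {x : ℝ} (hx : 0 ≤ x) : Real.exp x - 1 - x ≤ x^2 * Real.exp x / 2 := by
  have hexp : Real.exp x = ∑' n : ℕ, x ^ n / n.factorial := by
    rw [Real.exp_eq_exp_ℝ, NormedSpace.exp_eq_tsum_div]
  have hsum2 : Summable (fun n : ℕ => x^2/2 * (x ^ n / n.factorial)) :=
    (Real.summable_pow_div_factorial x).mul_left _
  calc Real.exp x - 1 - x = ∑' n : ℕ, x ^ (n+2) / (n+2).factorial := (exp_tail x).symm
    _ ≤ ∑' n : ℕ, x^2/2 * (x ^ n / n.factorial) := by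
        refine Summable.tsum_le_tsum (fun n => ?_) (exp_summable x) hsum2
        have hfac : ((n+2).factorial : ℝ) = ((n:ℝ)+2) * (((n:ℝ)+1) * n.factorial) := by
          rw [Nat.factorial_succ, Nat.factorial_succ]; push_cast; ring
        have hfacpos : (0:ℝ) < n.factorial := by positivity
        have h2 : (2:ℝ) * n.factorial ≤ ((n+2).factorial : ℝ) := by
          rw [hfac]
          have hn : (0:ℝ) ≤ (n:ℝ) := Nat.cast_nonneg n
          nlinarith [mul_nonneg hn hfacpos.le, mul_nonneg (mul_nonneg hn hn) hfacpos.le]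
        have hx2 : (0:ℝ) ≤ x ^ (n+2) := by positivity
        calc x ^ (n+2) / ((n+2).factorial : ℝ) ≤ x ^ (n+2) / (2 * n.factorial) := by
              gcongr
            _ = x^2/2 * (x ^ n / n.factorial) := by
              rw [pow_add]; field_simp
    _ = x^2/2 * Real.exp x := by rw [tsum_mul_left, ← hexp]
    _ = x^2 * Real.exp x / 2 := by ring

set_option maxHeartbeats 2000000 in
lemma Tint_tendsto :
    Tendsto (fun z : ℝ => Tint z / (z ^ (-(3:ℝ)/2) * Real.exp z)) atTop
      (nhds (Real.Gamma (3/2))) := by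
  set den : ℝ → ℝ := fun z => z ^ (-(3:ℝ)/2) * Real.exp z with hden
  have hdenpos : ∀ z : ℝ, 0 < z → 0 < den z := by
    intro z hz
    exact mul_pos (Real.rpow_pos_of_pos hz _) (Real.exp_pos z)
  have hdeninv : ∀ z : ℝ, 0 < z → (den z)⁻¹ = z ^ ((3:ℝ)/2) * Real.exp (-z) := by
    intro z hz
    have hd : den z = z ^ (-(3:ℝ)/2) * Real.exp z := rfl
    rw [hd, mul_inv, show (-(3:ℝ)/2) = -((3:ℝ)/2) from by norm_num,
      Real.rpow_neg hz.le, inv_inv, Real.exp_neg]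
  -- the three pieces
  set I1 : ℝ → ℝ := fun z => ∫ u in Ioc (0:ℝ) (1/2),
    Real.sqrt (1-u) * (Real.exp (z*u) - 1 - z*u) / u^2 with hI1
  set I2 : ℝ → ℝ := fun z => ∫ u in (1/2:ℝ)..1, Real.sqrt (1-u) * Real.exp (z*u) / u^2
    with hI2
  set I3 : ℝ → ℝ := fun z => ∫ u in (1/2:ℝ)..1, Real.sqrt (1-u) * (1 + z*u) / u^2 with hI3
  -- measurability of g z
  have hmeasg : ∀ z : ℝ, Measurable (fun u : ℝ =>
      Real.sqrt (1-u) * (Real.exp (z*u) - 1 - z*u) / u^2) := by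
    intro z
    apply Measurable.div
    · apply Measurable.mul
      · exact Real.continuous_sqrt.measurable.comp (measurable_const.sub measurable_id)
      · exact ((Real.continuous_exp.measurable.comp (measurable_id.const_mul z)).sub
          measurable_const).sub (measurable_id.const_mul z)
    · exact measurable_id.pow_const 2
  -- pointwise bound on (0,1)
  have hgbound : ∀ z : ℝ, 0 < z → ∀ u ∈ Ioo (0:ℝ) 1,
      ‖Real.sqrt (1-u) * (Real.exp (z*u) - 1 - z*u) / u^2‖ ≤ z^2 * Real.exp z / 2 := by
    intro z hz u hu
    have hu0 : 0 < u := hu.1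
    have hu1 : u < 1 := hu.2
    have hzu : 0 ≤ z*u := by positivity
    have h1 : Real.exp (z*u) - 1 - z*u ≤ (z*u)^2 * Real.exp (z*u) / 2 := exp_ub hzu
    have h2 : Real.exp (z*u) ≤ Real.exp z := by
      apply Real.exp_le_exp.mpr; nlinarith
    have hs1 : Real.sqrt (1-u) ≤ 1 := Real.sqrt_le_one.mpr (by linarith)
    have hnn : 0 ≤ Real.exp (z*u) - 1 - z*u := exp_lb (z*u)
    rw [Real.norm_eq_abs, abs_of_nonneg (by positivity)]
    rw [div_le_iff₀ (by positivity : (0:ℝ) < u^2)]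
    have : Real.sqrt (1-u) * (Real.exp (z*u) - 1 - z*u) ≤ (z*u)^2 * Real.exp z / 2 := by
      calc Real.sqrt (1-u) * (Real.exp (z*u) - 1 - z*u)
          ≤ 1 * (Real.exp (z*u) - 1 - z*u) := by gcongr
        _ = Real.exp (z*u) - 1 - z*u := one_mul _
        _ ≤ (z*u)^2 * Real.exp (z*u) / 2 := h1
        _ ≤ (z*u)^2 * Real.exp z / 2 := by gcongr
    calc Real.sqrt (1-u) * (Real.exp (z*u) - 1 - z*u) ≤ (z*u)^2 * Real.exp z / 2 := this
      _ = (z^2 * Real.exp z / 2) * u^2 := by ring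
  -- integrability on Ioo 0 1
  have hintg : ∀ z : ℝ, 0 < z → IntegrableOn (fun u : ℝ =>
      Real.sqrt (1-u) * (Real.exp (z*u) - 1 - z*u) / u^2) (Ioo (0:ℝ) 1) volume := by
    intro z hz
    refine Measure.integrableOn_of_bounded (by simp [Real.volume_Ioo]) 
      ((hmeasg z).aestronglyMeasurable) (M := z^2 * Real.exp z / 2) ?_
    rw [MeasureTheory.ae_restrict_iff' measurableSet_Ioo]
    filter_upwards with u hu using hgbound z hz u hu
  -- decomposition
  have hdecomp : ∀ z : ℝ, 0 < z → Tint z = I1 z + (I2 z - I3 z) := by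
    intro z hz
    have hsplit : Ioc (0:ℝ) (1/2) ∪ Ioo (1/2) 1 = Ioo (0:ℝ) 1 :=
      Set.Ioc_union_Ioo_eq_Ioo (by norm_num) (by norm_num)
    have hdisj : Disjoint (Ioc (0:ℝ) (1/2)) (Ioo (1/2:ℝ) 1) := by
      refine Set.disjoint_left.mpr fun x hx1 hx2 => ?_
      exact absurd hx2.1 (not_lt.mpr hx1.2)
    have hint1 : IntegrableOn (fun u : ℝ =>
        Real.sqrt (1-u) * (Real.exp (z*u) - 1 - z*u) / u^2) (Ioc (0:ℝ) (1/2)) volume :=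
      (hintg z hz).mono_set (by rw [← hsplit]; exact subset_union_left)
    have hint2 : IntegrableOn (fun u : ℝ =>
        Real.sqrt (1-u) * (Real.exp (z*u) - 1 - z*u) / u^2) (Ioo (1/2:ℝ) 1) volume :=
      (hintg z hz).mono_set (by rw [← hsplit]; exact subset_union_right)
    have e1 : Tint z = I1 z + ∫ u in Ioo (1/2:ℝ) 1,
        Real.sqrt (1-u) * (Real.exp (z*u) - 1 - z*u) / u^2 := by
      rw [Tint, ← hsplit, MeasureTheory.setIntegral_union hdisj measurableSet_Ioo hint1 hint2]
    -- second piece: split the integrand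
    have hintE : IntegrableOn (fun u : ℝ => Real.sqrt (1-u) * Real.exp (z*u) / u^2)
        (Ioo (1/2:ℝ) 1) volume := by
      refine Measure.integrableOn_of_bounded (by simp [Real.volume_Ioo]) ?_
        (M := 4 * Real.exp z) ?_
      · apply Measurable.aestronglyMeasurable
        apply Measurable.div
        · exact (Real.continuous_sqrt.measurable.comp (measurable_const.sub measurable_id)).mul
            (Real.continuous_exp.measurable.comp (measurable_id.const_mul z))
        · exact measurable_id.pow_const 2
      · rw [MeasureTheory.ae_restrict_iff' measurableSet_Ioo]
        filter_upwards with u hu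
        have hu0 : (1:ℝ)/2 < u := hu.1
        have hu1 : u < 1 := hu.2
        have hs1 : Real.sqrt (1-u) ≤ 1 := Real.sqrt_le_one.mpr (by linarith)
        have h2 : Real.exp (z*u) ≤ Real.exp z := Real.exp_le_exp.mpr (by nlinarith)
        have hu2 : (1:ℝ)/4 ≤ u^2 := by nlinarith
        rw [Real.norm_eq_abs, abs_of_nonneg (by positivity), div_le_iff₀ (by positivity)]
        nlinarith [Real.exp_pos z, Real.sqrt_nonneg (1-u), Real.exp_pos (z*u),
          mul_nonneg (Real.sqrt_nonneg (1-u)) (Real.exp_pos (z*u)).le]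
    have hintL : IntegrableOn (fun u : ℝ => Real.sqrt (1-u) * (1 + z*u) / u^2)
        (Ioo (1/2:ℝ) 1) volume := by
      refine Measure.integrableOn_of_bounded (by simp [Real.volume_Ioo]) ?_
        (M := 4 * (1 + z)) ?_
      · apply Measurable.aestronglyMeasurable
        apply Measurable.div
        · exact (Real.continuous_sqrt.measurable.comp (measurable_const.sub measurable_id)).mul
            (measurable_const.add (measurable_id.const_mul z))
        · exact measurable_id.pow_const 2
      · rw [MeasureTheory.ae_restrict_iff' measurableSet_Ioo]
        filter_upwards with u hu
        have hu0 : (1:ℝ)/2 < u := hu.1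
        have hu1 : u < 1 := hu.2
        have hs1 : Real.sqrt (1-u) ≤ 1 := Real.sqrt_le_one.mpr (by linarith)
        have hzu : 1 + z*u ≤ 1 + z := by nlinarith
        have hzu0 : 0 ≤ 1 + z*u := by nlinarith
        have hu2 : (1:ℝ)/4 ≤ u^2 := by nlinarith
        rw [Real.norm_eq_abs, abs_of_nonneg (by positivity), div_le_iff₀ (by positivity)]
        nlinarith [Real.sqrt_nonneg (1-u)]
    have e2 : (∫ u in Ioo (1/2:ℝ) 1, Real.sqrt (1-u) * (Real.exp (z*u) - 1 - z*u) / u^2)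
        = (∫ u in Ioo (1/2:ℝ) 1, Real.sqrt (1-u) * Real.exp (z*u) / u^2)
          - ∫ u in Ioo (1/2:ℝ) 1, Real.sqrt (1-u) * (1 + z*u) / u^2 := by
      rw [← MeasureTheory.integral_sub hintE hintL]
      refine MeasureTheory.integral_congr_ae (Eventually.of_forall fun u => ?_)
      ring
    have e3 : (∫ u in Ioo (1/2:ℝ) 1, Real.sqrt (1-u) * Real.exp (z*u) / u^2) = I2 z := by
      simp only [hI2]
      rw [intervalIntegral.integral_of_le (by norm_num : (1:ℝ)/2 ≤ 1),
        MeasureTheory.integral_Ioc_eq_integral_Ioo]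
    have e4 : (∫ u in Ioo (1/2:ℝ) 1, Real.sqrt (1-u) * (1 + z*u) / u^2) = I3 z := by
      simp only [hI3]
      rw [intervalIntegral.integral_of_le (by norm_num : (1:ℝ)/2 ≤ 1),
        MeasureTheory.integral_Ioc_eq_integral_Ioo]
    rw [e1, e2, e3, e4]
  -- piece 1 tends to 0
  have h1 : Tendsto (fun z : ℝ => I1 z / den z) atTop (nhds 0) := by
    apply squeeze_zero_norm'
      (a := fun z : ℝ => (1/4) * (z ^ ((7:ℝ)/2) * Real.exp (-((1:ℝ)/2) * z)))
    · filter_upwards [eventually_gt_atTop (0:ℝ)] with z hz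
      have hb : ‖I1 z‖ ≤ (z^2 * Real.exp (z/2) / 2) * (volume (Ioc (0:ℝ) (1/2))).toReal := by
        refine MeasureTheory.norm_setIntegral_le_of_norm_le_const
          (by simp [Real.volume_Ioc]) (fun u hu => ?_)
        have hu0 : 0 < u := hu.1
        have hu1 : u ≤ 1/2 := hu.2
        have hzu : 0 ≤ z*u := by positivity
        have hub : Real.exp (z*u) ≤ Real.exp (z/2) := Real.exp_le_exp.mpr (by nlinarith)
        have hnn : 0 ≤ Real.exp (z*u) - 1 - z*u := exp_lb (z*u)
        have hs1 : Real.sqrt (1-u) ≤ 1 := Real.sqrt_le_one.mpr (by linarith)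
        rw [Real.norm_eq_abs, abs_of_nonneg (by positivity),
          div_le_iff₀ (by positivity : (0:ℝ) < u^2)]
        have hkey : Real.exp (z*u) - 1 - z*u ≤ (z*u)^2 * Real.exp (z/2) / 2 := by
          calc Real.exp (z*u) - 1 - z*u ≤ (z*u)^2 * Real.exp (z*u) / 2 := exp_ub hzu
            _ ≤ (z*u)^2 * Real.exp (z/2) / 2 := by gcongr
        calc Real.sqrt (1-u) * (Real.exp (z*u) - 1 - z*u)
            ≤ 1 * (Real.exp (z*u) - 1 - z*u) := by gcongr
          _ ≤ (z*u)^2 * Real.exp (z/2) / 2 := by rw [one_mul]; exact hkey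
          _ = (z^2 * Real.exp (z/2) / 2) * u^2 := by ring
      have hvol : (volume (Ioc (0:ℝ) (1/2))).toReal = 1/2 := by
        simp [Real.volume_Ioc]
      rw [hvol] at hb
      have hdpos := hdenpos z hz
      have step1 : ‖I1 z / den z‖ ≤ (z^2 * Real.exp (z/2) / 2 * (1/2)) / den z := by
        rw [norm_div, Real.norm_eq_abs (den z), abs_of_pos hdpos]
        gcongr
      refine step1.trans (le_of_eq ?_)
      rw [div_eq_mul_inv, hdeninv z hz]
      rw [show z^2 = z ^ ((2:ℝ)) from (Real.rpow_natCast z 2).symm ▸ (by norm_num)]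
      rw [show Real.exp (-((1:ℝ)/2) * z) = Real.exp (z/2) * Real.exp (-z) from by
        rw [← Real.exp_add]; ring_nf]
      rw [show z ^ ((7:ℝ)/2) = z ^ ((2:ℝ)) * z ^ ((3:ℝ)/2) from by
        rw [← Real.rpow_add hz]; norm_num]
      ring
    · have := (tendsto_rpow_mul_exp_neg_mul_atTop_nhds_zero ((7:ℝ)/2) (1/2)
        (by norm_num)).const_mul (1/4 : ℝ)
      simpa using this
  -- piece 3 tends to 0
  have h3 : Tendsto (fun z : ℝ => I3 z / den z) atTop (nhds 0) := by
    apply squeeze_zero_norm'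
      (a := fun z : ℝ => 2 * (z ^ ((3:ℝ)/2) * Real.exp (-(1:ℝ) * z))
        + 2 * z * (z ^ ((3:ℝ)/2) * Real.exp (-(1:ℝ) * z)))
    · filter_upwards [eventually_gt_atTop (0:ℝ)] with z hz
      have hb : ‖I3 z‖ ≤ (4 * (1+z)) * |1 - 1/2| := by
        refine intervalIntegral.norm_integral_le_of_norm_le_const (fun u hu => ?_)
        rw [uIoc_of_le (by norm_num : (1:ℝ)/2 ≤ 1)] at hu
        have hu0 : (1:ℝ)/2 < u := hu.1
        have hu1 : u ≤ 1 := hu.2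
        have hs1 : Real.sqrt (1-u) ≤ 1 := Real.sqrt_le_one.mpr (by linarith)
        have hzu : 1 + z*u ≤ 1 + z := by nlinarith
        have hzu0 : 0 ≤ 1 + z*u := by nlinarith
        have hu2 : (1:ℝ)/4 ≤ u^2 := by nlinarith
        rw [Real.norm_eq_abs, abs_of_nonneg (by positivity),
          div_le_iff₀ (by positivity : (0:ℝ) < u^2)]
        nlinarith [Real.sqrt_nonneg (1-u)]
      have hdpos := hdenpos z hz
      have step1 : ‖I3 z / den z‖ ≤ ((4 * (1+z)) * |1 - 1/2|) / den z := by
        rw [norm_div, Real.norm_eq_abs (den z), abs_of_pos hdpos]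
        gcongr
      refine step1.trans (le_of_eq ?_)
      rw [div_eq_mul_inv, hdeninv z hz,
        show |1 - (1:ℝ)/2| = 1/2 from by norm_num,
        show Real.exp (-(1:ℝ) * z) = Real.exp (-z) from by norm_num]
      ring
    · have t1 := (tendsto_rpow_mul_exp_neg_mul_atTop_nhds_zero ((3:ℝ)/2) 1
        (by norm_num)).const_mul (2 : ℝ)
      have t2 := (tendsto_rpow_mul_exp_neg_mul_atTop_nhds_zero ((5:ℝ)/2) 1
        (by norm_num)).const_mul (2 : ℝ)
      have hcongr : ∀ᶠ z : ℝ in atTop,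
          2 * (z ^ ((5:ℝ)/2) * Real.exp (-(1:ℝ) * z))
            = 2 * z * (z ^ ((3:ℝ)/2) * Real.exp (-(1:ℝ) * z)) := by
        filter_upwards [eventually_gt_atTop (0:ℝ)] with z hz
        rw [show z ^ ((5:ℝ)/2) = z ^ ((1:ℝ)) * z ^ ((3:ℝ)/2) from by
          rw [← Real.rpow_add hz]; norm_num, Real.rpow_one]
        ring
      have hfin := t1.add (t2.congr' hcongr)
      rw [show (2:ℝ)*0 + 2*0 = 0 from by norm_num] at hfin
      exact hfin
  -- piece 2 tends to Gamma(3/2)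
  have h2 : Tendsto (fun z : ℝ => I2 z / den z) atTop (nhds (Real.Gamma (3/2))) := by
    refine Ktendsto.congr' ?_
    filter_upwards [eventually_gt_atTop (0:ℝ)] with z hz
    have hdpos := hdenpos z hz
    have hshape : den z = Real.exp z / (z * Real.sqrt z) := by
      have hd : den z = z ^ (-(3:ℝ)/2) * Real.exp z := rfl
      rw [hd, show (-(3:ℝ)/2) = -((3:ℝ)/2) from by norm_num, Real.rpow_neg hz.le,
        show ((3:ℝ)/2) = 1 + 1/2 from by norm_num, Real.rpow_add hz, Real.rpow_one,
        ← Real.sqrt_eq_rpow]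
      ring
    have : I2 z = den z * ∫ s in (0:ℝ)..(z/2), Real.sqrt s * Real.exp (-s) / (1 - s/z)^2 := by
      simp only [hI2]
      rw [Msub hz, hshape]
    rw [this, mul_comm, mul_div_assoc, div_self (ne_of_gt hdpos), mul_one]
  -- combine
  have final := (h1.add h2).sub h3
  rw [zero_add, sub_zero] at final
  refine final.congr' ?_
  filter_upwards [eventually_gt_atTop (0:ℝ)] with z hz
  rw [hdecomp z hz]
  ring

noncomputable def F2fun (z : ℝ) : ℝ :=
  Real.sqrt π *
    ∑' n : ℕ, z ^ (n + 2) /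
      (((n : ℝ) + 2) * ((n : ℝ) + 1) * Real.Gamma (1 / 2 + ((n : ℝ) + 2)))

theorem F2fun_asymptotic :
    Tendsto (fun z => F2fun z / (z ^ (-(3:ℝ)/2) * Real.exp z)) atTop (nhds (Real.sqrt π)) := by
  have hΓ32 : (0:ℝ) < Real.Gamma (3/2) := Real.Gamma_pos_of_pos (by norm_num)
  have key := Tint_tendsto.const_mul (Real.sqrt π / Real.Gamma (3/2))
  have hval : Real.sqrt π / Real.Gamma (3/2) * Real.Gamma (3/2) = Real.sqrt π := by
    field_simp
  rw [hval] at key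
  refine key.congr' ?_
  filter_upwards [eventually_gt_atTop (0:ℝ)] with z hz
  rw [F2fun, closed_form hz]
  ring
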